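/- If a forest T has maximum degree at most 3 and some connected component of T contains two distinct vertices of degree 3, then T contains H_ℓ as an induced subgraph for some ℓ ≥ 1, namely for ℓ equal to the minimum distance between two degree-3 vertices of T. -/

import Mathlib

open scoped Classical

/-- The graph `H_ℓ`: a central path `0, 1, ..., ℓ` of length `ℓ`, with two pendant
leaves `ℓ+1, ℓ+2` attached to `0` and two pendant leaves `ℓ+3, ℓ+4` attached to `ℓ`. -/
def Hgraph (l : ℕ) : SimpleGraph (Fin (l + 5)) :=
  SimpleGraph.fromRel (fun a b =>
    (a.val + 1 = b.val ∧ b.val ≤ l) ∨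
    (a.val = 0 ∧ (b.val = l + 1 ∨ b.val = l + 2)) ∨
    (a.val = l ∧ (b.val = l + 3 ∨ b.val = l + 4)))


open SimpleGraph Walk

section ForestHelpers

variable {V : Type*} {G : SimpleGraph V}

variable {V : Type*} {G : SimpleGraph V}

lemma walk_split {x y : V} (w : G.Walk x y) :
    ∀ i : ℕ, i ≤ w.length →
    ∃ (p : G.Walk x (w.getVert i)) (q : G.Walk (w.getVert i) y),
      w = p.append q ∧ p.length = i := by
  induction w with
  | nil =>
    intro i hi
    simp only [Walk.length_nil, Nat.le_zero] at hi
    subst hi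
    exact ⟨Walk.nil, Walk.nil, rfl, rfl⟩
  | @cons a b c h p ih =>
    intro i hi
    cases i with
    | zero => exact ⟨Walk.nil, Walk.cons h p, rfl, rfl⟩
    | succ n =>
      obtain ⟨p₁, q₁, hpq, hlen⟩ := ih n (by simpa [Walk.length_cons] using hi)
      exact ⟨Walk.cons h p₁, q₁, by show Walk.cons h p = Walk.cons h (p₁.append q₁); exact congrArg (Walk.cons h) hpq, by simp [hlen]⟩

lemma path_unique' (hG : G.IsAcyclic) {x y : V} {p q : G.Walk x y}
    (hp : p.IsPath) (hq : q.IsPath) : p = q :=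
  congrArg Subtype.val ((SimpleGraph.isAcyclic_iff_path_unique.mp hG) ⟨p, hp⟩ ⟨q, hq⟩)

lemma dist_tri {x y z : V} (h1 : G.Reachable x y) (h2 : G.Reachable y z) :
    G.dist x z ≤ G.dist x y + G.dist y z := by
  obtain ⟨p, hp⟩ := h1.exists_walk_length_eq_dist
  obtain ⟨q, hq⟩ := h2.exists_walk_length_eq_dist
  calc G.dist x z ≤ (p.append q).length := SimpleGraph.dist_le _
    _ = _ := by rw [Walk.length_append, hp, hq]

lemma dist_getVert {u v : V} (w : G.Walk u v) (hw : w.length = G.dist u v)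
    {i : ℕ} (hi : i ≤ w.length) :
    G.dist u (w.getVert i) = i ∧ G.dist (w.getVert i) v = w.length - i := by
  obtain ⟨p, q, hpq, hplen⟩ := walk_split w i hi
  have hql : q.length = w.length - i := by
    have := congrArg Walk.length hpq
    rw [Walk.length_append, hplen] at this
    omega
  have h1 : G.dist u (w.getVert i) ≤ i := by
    have := SimpleGraph.dist_le p; omega
  have h2 : G.dist (w.getVert i) v ≤ w.length - i := by
    have := SimpleGraph.dist_le q; omega
  have h3 : G.dist u v ≤ G.dist u (w.getVert i) + G.dist (w.getVert i) v :=
    dist_tri ⟨p⟩ ⟨q⟩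
  omega

lemma dist_getVert_getVert {u v : V} (w : G.Walk u v) (hw : w.length = G.dist u v)
    {i j : ℕ} (hij : i ≤ j) (hj : j ≤ w.length) :
    G.dist (w.getVert i) (w.getVert j) = j - i := by
  obtain ⟨p, q, hpq, hplen⟩ := walk_split w i (le_trans hij hj)
  have hql : q.length = w.length - i := by
    have := congrArg Walk.length hpq
    rw [Walk.length_append, hplen] at this
    omega
  have hgv : w.getVert j = q.getVert (j - i) := by
    conv_lhs => rw [hpq]
    rw [Walk.getVert_append]
    simp [hplen, Nat.not_lt.mpr hij]
  obtain ⟨p₂, q₂, hpq₂, hplen₂⟩ := walk_split q (j - i) (by omega)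
  have hub : G.dist (w.getVert i) (w.getVert j) ≤ j - i := by
    rw [hgv]
    have := SimpleGraph.dist_le p₂; omega
  have hdi := dist_getVert w hw (le_trans hij hj)
  have hdj := dist_getVert w hw hj
  have h3 : G.dist u (w.getVert j) ≤ G.dist u (w.getVert i) +
      G.dist (w.getVert i) (w.getVert j) :=
    dist_tri ⟨p⟩ (by rw [hgv]; exact ⟨p₂⟩)
  omega

lemma getVert_ne {u v : V} (w : G.Walk u v) (hw : w.length = G.dist u v)
    {i j : ℕ} (hi : i ≤ w.length) (hj : j ≤ w.length) (hne : i ≠ j) :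
    w.getVert i ≠ w.getVert j := by
  intro he
  rcases Nat.lt_or_ge i j with h | h
  · have := dist_getVert_getVert w hw (le_of_lt h) hj
    rw [he, SimpleGraph.dist_self] at this; omega
  · have := dist_getVert_getVert w hw h hi
    rw [← he, SimpleGraph.dist_self] at this; omega

lemma adj_getVert_imp {u v : V} (w : G.Walk u v) (hw : w.length = G.dist u v)
    {i j : ℕ} (hi : i ≤ w.length) (hj : j ≤ w.length)
    (hadj : G.Adj (w.getVert i) (w.getVert j)) : i + 1 = j ∨ j + 1 = i := by
  have h1 : G.dist (w.getVert i) (w.getVert j) = 1 :=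
    SimpleGraph.dist_eq_one_iff_adj.mpr hadj
  rcases Nat.lt_trichotomy i j with h | h | h
  · have := dist_getVert_getVert w hw (le_of_lt h) hj; omega
  · subst h; exact absurd rfl hadj.ne
  · have := dist_getVert_getVert w hw (le_of_lt h) hi
    rw [SimpleGraph.dist_comm] at h1; omega

lemma leaf_not_on_path {u v a : V} (w : G.Walk u v) (hw : w.length = G.dist u v)
    (hau : G.Adj u a) (ha1 : a ≠ w.getVert 1) {i : ℕ} (hi : i ≤ w.length) :
    a ≠ w.getVert i := by
  intro he
  cases Nat.eq_zero_or_pos i with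
  | inl h0 => subst h0; rw [Walk.getVert_zero] at he; exact hau.ne' he
  | inr hpos =>
    have hd := (dist_getVert w hw hi).1
    rw [← he] at hd
    have h1 : G.dist u a = 1 := SimpleGraph.dist_eq_one_iff_adj.mpr hau
    have : i = 1 := by omega
    subst this; exact ha1 he

lemma leaf_not_on_path' {u v b : V} (w : G.Walk u v) (hw : w.length = G.dist u v)
    (hbv : G.Adj v b) (hb1 : b ≠ w.getVert (w.length - 1)) {i : ℕ} (hi : i ≤ w.length) :
    b ≠ w.getVert i := by
  have hw' : w.reverse.length = G.dist v u := by
    rw [Walk.length_reverse, hw, SimpleGraph.dist_comm]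
  have hb1' : b ≠ w.reverse.getVert 1 := by rwa [Walk.getVert_reverse]
  have h := leaf_not_on_path w.reverse hw' hbv hb1' (i := w.length - i)
    (by rw [Walk.length_reverse]; omega)
  rw [Walk.getVert_reverse] at h
  have h2 : w.length - (w.length - i) = i := by omega
  rwa [h2] at h

lemma no_adj_leaf (hG : G.IsAcyclic) {u v a : V} (w : G.Walk u v)
    (hw : w.length = G.dist u v)
    (hau : G.Adj u a) (ha1 : a ≠ w.getVert 1) {i : ℕ} (hi1 : 1 ≤ i)
    (hil : i ≤ w.length) : ¬ G.Adj a (w.getVert i) := by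
  intro hadj
  have hwp : w.IsPath := w.isPath_of_length_eq_dist hw
  obtain ⟨p, q, hpq, hplen⟩ := walk_split w i hil
  have hpp : p.IsPath := by
    rw [hpq] at hwp; exact hwp.of_append_left
  have hune : u ≠ w.getVert i := by
    have := getVert_ne w hw (i := 0) (j := i) (by omega) hil (by omega)
    rwa [Walk.getVert_zero] at this
  have hane : a ≠ w.getVert i := leaf_not_on_path w hw hau ha1 hil
  set p₂ : G.Walk u (w.getVert i) := Walk.cons hau (Walk.cons hadj Walk.nil) with hp₂def
  have hp₂ : p₂.IsPath := by
    simp [hp₂def, Walk.cons_isPath_iff, hane, hau.ne, hune]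
  have heq := path_unique' hG hpp hp₂
  have hlen2 : i = 2 := by
    have := congrArg Walk.length heq
    simp [hp₂def, hplen] at this
    omega
  have hgv1 : p.getVert 1 = w.getVert 1 := by
    conv_rhs => rw [hpq]
    rw [Walk.getVert_append, if_pos (by omega)]
  have hgv2 : p.getVert 1 = a := by rw [heq]; rfl
  exact ha1 (hgv2.symm.trans hgv1)

lemma no_adj_leaf' (hG : G.IsAcyclic) {u v b : V} (w : G.Walk u v)
    (hw : w.length = G.dist u v)
    (hbv : G.Adj v b) (hb1 : b ≠ w.getVert (w.length - 1)) {i : ℕ}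
    (hil : i + 1 ≤ w.length) : ¬ G.Adj b (w.getVert i) := by
  have hw' : w.reverse.length = G.dist v u := by
    rw [Walk.length_reverse, hw, SimpleGraph.dist_comm]
  have hb1' : b ≠ w.reverse.getVert 1 := by rwa [Walk.getVert_reverse]
  have h := no_adj_leaf hG w.reverse hw' hbv hb1' (i := w.length - i)
    (by omega) (by rw [Walk.length_reverse]; omega)
  rw [Walk.getVert_reverse] at h
  have h2 : w.length - (w.length - i) = i := by omega
  rwa [h2] at h

lemma not_adj_of_adj_adj (hG : G.IsAcyclic) {u a b : V}
    (ha : G.Adj u a) (hb : G.Adj u b) (hab : a ≠ b) : ¬ G.Adj a b := by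
  intro hadj
  have h1 : (Walk.cons hb Walk.nil : G.Walk u b).IsPath := by
    simp [Walk.cons_isPath_iff, hb.ne]
  have h2 : (Walk.cons ha (Walk.cons hadj Walk.nil) : G.Walk u b).IsPath := by
    simp [Walk.cons_isPath_iff, ha.ne, hb.ne, hab]
  have := congrArg Walk.length (path_unique' hG h1 h2)
  simp at this

lemma leaves_distinct (hG : G.IsAcyclic) {u v a b : V} (w : G.Walk u v)
    (hw : w.length = G.dist u v) (hL : 1 ≤ w.length)
    (hau : G.Adj u a) (ha1 : a ≠ w.getVert 1) (hbv : G.Adj v b) : a ≠ b := by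
  intro he; subst he
  have hwp : w.IsPath := w.isPath_of_length_eq_dist hw
  have huv : u ≠ v := by
    have := getVert_ne w hw (i := 0) (j := w.length) (by omega) le_rfl (by omega)
    rwa [Walk.getVert_zero, Walk.getVert_length] at this
  set p₂ : G.Walk u v := Walk.cons hau (Walk.cons hbv.symm Walk.nil) with hp₂def
  have hp₂ : p₂.IsPath := by
    simp [hp₂def, Walk.cons_isPath_iff, hau.ne, huv, hbv.ne']
  have heq := path_unique' hG hwp hp₂
  have h1 : w.getVert 1 = a := by rw [heq]; rfl
  exact ha1 h1.symm

lemma cross_not_adj (hG : G.IsAcyclic) {u v a b : V} (w : G.Walk u v)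
    (hw : w.length = G.dist u v) (hL : 1 ≤ w.length)
    (hau : G.Adj u a) (ha1 : a ≠ w.getVert 1) (hbv : G.Adj v b)
    (hb1 : b ≠ w.getVert (w.length - 1)) : ¬ G.Adj a b := by
  intro hadj
  have hab : a ≠ b := leaves_distinct hG w hw hL hau ha1 hbv
  have hwp : w.IsPath := w.isPath_of_length_eq_dist hw
  have huv : u ≠ v := by
    have := getVert_ne w hw (i := 0) (j := w.length) (by omega) le_rfl (by omega)
    rwa [Walk.getVert_zero, Walk.getVert_length] at this
  have hub : u ≠ b := by
    have := leaf_not_on_path' w hw hbv hb1 (i := 0) (by omega)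
    rw [Walk.getVert_zero] at this; exact this.symm
  have hav : a ≠ v := by
    have := leaf_not_on_path w hw hau ha1 (i := w.length) le_rfl
    rwa [Walk.getVert_length] at this
  set p₂ : G.Walk u v := Walk.cons hau (Walk.cons hadj (Walk.cons hbv.symm Walk.nil))
    with hp₂def
  have hp₂ : p₂.IsPath := by
    simp [hp₂def, Walk.cons_isPath_iff, hau.ne, huv, hub, hab, hav, hbv.ne']
  have heq := path_unique' hG hwp hp₂
  have h1 : w.getVert 1 = a := by rw [heq]; rfl
  exact ha1 h1.symm

end ForestHelpers

lemma Hgraph_adj_iff (l : ℕ) (i j : Fin (l + 5)) :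
    (Hgraph l).Adj i j ↔ (i.val ≠ j.val ∧
      ((i.val + 1 = j.val ∧ j.val ≤ l) ∨ (j.val + 1 = i.val ∧ i.val ≤ l) ∨
       (i.val = 0 ∧ (j.val = l + 1 ∨ j.val = l + 2)) ∨
       (j.val = 0 ∧ (i.val = l + 1 ∨ i.val = l + 2)) ∨
       (i.val = l ∧ (j.val = l + 3 ∨ j.val = l + 4)) ∨
       (j.val = l ∧ (i.val = l + 3 ∨ i.val = l + 4)))) := by
  simp only [Hgraph, SimpleGraph.fromRel_adj, ne_eq, Fin.ext_iff]
  omega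

/-- If a forest `T` has maximum degree at most `3` and some connected component of `T`
contains two distinct vertices of degree `3`, then `T` contains `H_ℓ` as an induced
subgraph, where `ℓ ≥ 1` is the minimum distance between two distinct degree-3 vertices
of `T` lying in a common component. -/
theorem forest_two_deg3_contains_Hgraph {V : Type*} [Fintype V] (T : SimpleGraph V)
    (hforest : T.IsAcyclic) (hdeg : ∀ v : V, T.degree v ≤ 3)
    (h : ∃ u v : V, u ≠ v ∧ T.degree u = 3 ∧ T.degree v = 3 ∧ T.Reachable u v) :
    ∃ l : ℕ, 1 ≤ l ∧
      IsLeast {d : ℕ | ∃ u v : V, u ≠ v ∧ T.degree u = 3 ∧ T.degree v = 3 ∧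
        T.Reachable u v ∧ T.dist u v = d} l ∧
      Nonempty (Hgraph l ↪g T) := by
  classical
  set S : Set ℕ := {d : ℕ | ∃ u v : V, u ≠ v ∧ T.degree u = 3 ∧ T.degree v = 3 ∧
    T.Reachable u v ∧ T.dist u v = d} with hSdef
  have hSne : S.Nonempty := by
    obtain ⟨u, v, h1, h2, h3, h4⟩ := h
    exact ⟨T.dist u v, u, v, h1, h2, h3, h4, rfl⟩
  set l := sInf S with hldef
  have hmem : l ∈ S := Nat.sInf_mem hSne
  simp only [hSdef, Set.mem_setOf_eq] at hmem
  obtain ⟨u, v, hne, hdu, hdv, hre, hdist⟩ := hmem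
  have hl1 : 1 ≤ l := by
    have := hre.pos_dist_of_ne hne
    omega
  obtain ⟨w, hw⟩ := hre.exists_walk_length_eq_dist
  have hLl : w.length = l := by rw [hw, hdist]
  have hL1 : 1 ≤ w.length := by omega
  -- the two extra neighbours of u
  have hP1adj : T.Adj u (w.getVert 1) := by
    have := w.adj_getVert_succ (i := 0) (by omega)
    rwa [Walk.getVert_zero] at this
  have hcard : ((T.neighborFinset u).erase (w.getVert 1)).card = 2 := by
    rw [Finset.card_erase_of_mem (by rwa [SimpleGraph.mem_neighborFinset])]
    have h3 : (T.neighborFinset u).card = 3 := hdu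
    omega
  obtain ⟨a1, a2, ha12, hseta⟩ := Finset.card_eq_two.mp hcard
  have ha1m : a1 ∈ (T.neighborFinset u).erase (w.getVert 1) := by rw [hseta]; simp
  have ha2m : a2 ∈ (T.neighborFinset u).erase (w.getVert 1) := by rw [hseta]; simp
  rw [Finset.mem_erase, SimpleGraph.mem_neighborFinset] at ha1m ha2m
  obtain ⟨ha1ne, hua1⟩ := ha1m
  obtain ⟨ha2ne, hua2⟩ := ha2m
  -- the two extra neighbours of v
  have hPlm1 : T.Adj v (w.getVert (w.length - 1)) := by
    have h1 : w.length - 1 + 1 = w.length := by omega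
    have := w.adj_getVert_succ (i := w.length - 1) (by omega)
    rw [h1, Walk.getVert_length] at this
    exact this.symm
  have hcardv : ((T.neighborFinset v).erase (w.getVert (w.length - 1))).card = 2 := by
    rw [Finset.card_erase_of_mem (by rwa [SimpleGraph.mem_neighborFinset])]
    have h3 : (T.neighborFinset v).card = 3 := hdv
    omega
  obtain ⟨b1, b2, hb12, hsetb⟩ := Finset.card_eq_two.mp hcardv
  have hb1m : b1 ∈ (T.neighborFinset v).erase (w.getVert (w.length - 1)) := by rw [hsetb]; simp
  have hb2m : b2 ∈ (T.neighborFinset v).erase (w.getVert (w.length - 1)) := by rw [hsetb]; simp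
  rw [Finset.mem_erase, SimpleGraph.mem_neighborFinset] at hb1m hb2m
  obtain ⟨hb1ne, hvb1⟩ := hb1m
  obtain ⟨hb2ne, hvb2⟩ := hb2m
  -- collected facts
  have hP0 : w.getVert 0 = u := Walk.getVert_zero w
  have hPl : w.getVert l = v := by rw [← hLl]; exact w.getVert_length
  have hPinj : ∀ i j : ℕ, i ≤ l → j ≤ l → w.getVert i = w.getVert j → i = j := by
    intro i j hi hj he
    by_contra hne'
    exact getVert_ne w hw (by omega) (by omega) hne' he
  have hnp1 : ∀ k : ℕ, k ≤ l → a1 ≠ w.getVert k := fun k hk =>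
    leaf_not_on_path w hw hua1 ha1ne (by omega)
  have hnp2 : ∀ k : ℕ, k ≤ l → a2 ≠ w.getVert k := fun k hk =>
    leaf_not_on_path w hw hua2 ha2ne (by omega)
  have hnp3 : ∀ k : ℕ, k ≤ l → b1 ≠ w.getVert k := fun k hk =>
    leaf_not_on_path' w hw hvb1 hb1ne (by omega)
  have hnp4 : ∀ k : ℕ, k ≤ l → b2 ≠ w.getVert k := fun k hk =>
    leaf_not_on_path' w hw hvb2 hb2ne (by omega)
  have hab11 : a1 ≠ b1 := leaves_distinct hforest w hw hL1 hua1 ha1ne hvb1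
  have hab12 : a1 ≠ b2 := leaves_distinct hforest w hw hL1 hua1 ha1ne hvb2
  have hab21 : a2 ≠ b1 := leaves_distinct hforest w hw hL1 hua2 ha2ne hvb1
  have hab22 : a2 ≠ b2 := leaves_distinct hforest w hw hL1 hua2 ha2ne hvb2
  have hna12 : ¬ T.Adj a1 a2 := not_adj_of_adj_adj hforest hua1 hua2 ha12
  have hnb12 : ¬ T.Adj b1 b2 := not_adj_of_adj_adj hforest hvb1 hvb2 hb12
  have hnx11 : ¬ T.Adj a1 b1 := cross_not_adj hforest w hw hL1 hua1 ha1ne hvb1 hb1ne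
  have hnx12 : ¬ T.Adj a1 b2 := cross_not_adj hforest w hw hL1 hua1 ha1ne hvb2 hb2ne
  have hnx21 : ¬ T.Adj a2 b1 := cross_not_adj hforest w hw hL1 hua2 ha2ne hvb1 hb1ne
  have hnx22 : ¬ T.Adj a2 b2 := cross_not_adj hforest w hw hL1 hua2 ha2ne hvb2 hb2ne
  -- the embedding map
  set f : Fin (l + 5) → V := fun k =>
    if k.val ≤ l then w.getVert k.val
    else if k.val = l + 1 then a1
    else if k.val = l + 2 then a2
    else if k.val = l + 3 then b1
    else b2 with hfdef
  have hfle : ∀ k : Fin (l + 5), k.val ≤ l → f k = w.getVert k.val := by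
    intro k hk; simp only [hfdef]; rw [if_pos hk]
  have hf1 : ∀ k : Fin (l + 5), k.val = l + 1 → f k = a1 := by
    intro k hk; simp only [hfdef]; rw [if_neg (by omega), if_pos hk]
  have hf2 : ∀ k : Fin (l + 5), k.val = l + 2 → f k = a2 := by
    intro k hk; simp only [hfdef]; rw [if_neg (by omega), if_neg (by omega), if_pos hk]
  have hf3 : ∀ k : Fin (l + 5), k.val = l + 3 → f k = b1 := by
    intro k hk; simp only [hfdef]
    rw [if_neg (by omega), if_neg (by omega), if_neg (by omega), if_pos hk]
  have hf4 : ∀ k : Fin (l + 5), k.val = l + 4 → f k = b2 := by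
    intro k hk; simp only [hfdef]
    rw [if_neg (by omega), if_neg (by omega), if_neg (by omega), if_neg (by omega)]
  have hreg : ∀ k : Fin (l + 5),
      k.val ≤ l ∨ k.val = l + 1 ∨ k.val = l + 2 ∨ k.val = l + 3 ∨ k.val = l + 4 := by
    intro k; have := k.isLt; omega
  have hinj : Function.Injective f := by
    intro i j hij
    rcases hreg i with hi|hi|hi|hi|hi <;> rcases hreg j with hj|hj|hj|hj|hj
    · rw [hfle i hi, hfle j hj] at hij
      exact Fin.ext (hPinj _ _ hi hj hij)
    · rw [hfle i hi, hf1 j hj] at hij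
      exact absurd hij.symm (hnp1 _ hi)
    · rw [hfle i hi, hf2 j hj] at hij
      exact absurd hij.symm (hnp2 _ hi)
    · rw [hfle i hi, hf3 j hj] at hij
      exact absurd hij.symm (hnp3 _ hi)
    · rw [hfle i hi, hf4 j hj] at hij
      exact absurd hij.symm (hnp4 _ hi)
    · rw [hf1 i hi, hfle j hj] at hij
      exact absurd hij (hnp1 _ hj)
    · exact Fin.ext (by omega)
    · rw [hf1 i hi, hf2 j hj] at hij
      exact absurd hij ha12
    · rw [hf1 i hi, hf3 j hj] at hij
      exact absurd hij hab11
    · rw [hf1 i hi, hf4 j hj] at hij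
      exact absurd hij hab12
    · rw [hf2 i hi, hfle j hj] at hij
      exact absurd hij (hnp2 _ hj)
    · rw [hf2 i hi, hf1 j hj] at hij
      exact absurd hij ha12.symm
    · exact Fin.ext (by omega)
    · rw [hf2 i hi, hf3 j hj] at hij
      exact absurd hij hab21
    · rw [hf2 i hi, hf4 j hj] at hij
      exact absurd hij hab22
    · rw [hf3 i hi, hfle j hj] at hij
      exact absurd hij (hnp3 _ hj)
    · rw [hf3 i hi, hf1 j hj] at hij
      exact absurd hij hab11.symm
    · rw [hf3 i hi, hf2 j hj] at hij
      exact absurd hij hab21.symm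
    · exact Fin.ext (by omega)
    · rw [hf3 i hi, hf4 j hj] at hij
      exact absurd hij hb12
    · rw [hf4 i hi, hfle j hj] at hij
      exact absurd hij (hnp4 _ hj)
    · rw [hf4 i hi, hf1 j hj] at hij
      exact absurd hij hab12.symm
    · rw [hf4 i hi, hf2 j hj] at hij
      exact absurd hij hab22.symm
    · rw [hf4 i hi, hf3 j hj] at hij
      exact absurd hij hb12.symm
    · exact Fin.ext (by omega)
  have hiff : ∀ i j : Fin (l + 5), T.Adj (f i) (f j) ↔ (Hgraph l).Adj i j := by
    intro i j
    rw [Hgraph_adj_iff]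
    rcases hreg i with hi|hi|hi|hi|hi <;> rcases hreg j with hj|hj|hj|hj|hj
    · rw [hfle i hi, hfle j hj]
      constructor
      · intro hadj
        have hd := adj_getVert_imp w hw (by omega) (by omega) hadj
        omega
      · rintro ⟨hne', hc⟩
        have hd : i.val + 1 = j.val ∨ j.val + 1 = i.val := by omega
        rcases hd with h1 | h1
        · rw [← h1]; exact w.adj_getVert_succ (by omega)
        · rw [← h1]; exact (w.adj_getVert_succ (by omega)).symm
    · rw [hfle i hi, hf1 j hj]
      constructor
      · intro hadj
        have hi0 : i.val = 0 := by
          by_contra h0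
          exact no_adj_leaf hforest w hw hua1 ha1ne (by omega) (by omega) hadj.symm
        omega
      · rintro ⟨hne', hc⟩
        have hi0 : i.val = 0 := by omega
        rw [hi0, Walk.getVert_zero]; exact hua1
    · rw [hfle i hi, hf2 j hj]
      constructor
      · intro hadj
        have hi0 : i.val = 0 := by
          by_contra h0
          exact no_adj_leaf hforest w hw hua2 ha2ne (by omega) (by omega) hadj.symm
        omega
      · rintro ⟨hne', hc⟩
        have hi0 : i.val = 0 := by omega
        rw [hi0, Walk.getVert_zero]; exact hua2
    · rw [hfle i hi, hf3 j hj]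
      constructor
      · intro hadj
        have hil : i.val = l := by
          by_contra h0
          exact no_adj_leaf' hforest w hw hvb1 hb1ne (by omega) hadj.symm
        omega
      · rintro ⟨hne', hc⟩
        have hil : i.val = l := by omega
        rw [hil, hPl]; exact hvb1
    · rw [hfle i hi, hf4 j hj]
      constructor
      · intro hadj
        have hil : i.val = l := by
          by_contra h0
          exact no_adj_leaf' hforest w hw hvb2 hb2ne (by omega) hadj.symm
        omega
      · rintro ⟨hne', hc⟩
        have hil : i.val = l := by omega
        rw [hil, hPl]; exact hvb2
    · rw [hf1 i hi, hfle j hj]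
      constructor
      · intro hadj
        have hj0 : j.val = 0 := by
          by_contra h0
          exact no_adj_leaf hforest w hw hua1 ha1ne (by omega) (by omega) hadj
        omega
      · rintro ⟨hne', hc⟩
        have hj0 : j.val = 0 := by omega
        rw [hj0, Walk.getVert_zero]; exact hua1.symm
    · rw [hf1 i hi, hf1 j hj]
      constructor
      · intro hadj; exact absurd rfl hadj.ne
      · rintro ⟨hne', hc⟩; exfalso; omega
    · rw [hf1 i hi, hf2 j hj]
      constructor
      · intro hadj; exact absurd hadj hna12
      · rintro ⟨hne', hc⟩; exfalso; omega
    · rw [hf1 i hi, hf3 j hj]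
      constructor
      · intro hadj; exact absurd hadj hnx11
      · rintro ⟨hne', hc⟩; exfalso; omega
    · rw [hf1 i hi, hf4 j hj]
      constructor
      · intro hadj; exact absurd hadj hnx12
      · rintro ⟨hne', hc⟩; exfalso; omega
    · rw [hf2 i hi, hfle j hj]
      constructor
      · intro hadj
        have hj0 : j.val = 0 := by
          by_contra h0
          exact no_adj_leaf hforest w hw hua2 ha2ne (by omega) (by omega) hadj
        omega
      · rintro ⟨hne', hc⟩
        have hj0 : j.val = 0 := by omega
        rw [hj0, Walk.getVert_zero]; exact hua2.symm
    · rw [hf2 i hi, hf1 j hj]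
      constructor
      · intro hadj; exact absurd hadj.symm hna12
      · rintro ⟨hne', hc⟩; exfalso; omega
    · rw [hf2 i hi, hf2 j hj]
      constructor
      · intro hadj; exact absurd rfl hadj.ne
      · rintro ⟨hne', hc⟩; exfalso; omega
    · rw [hf2 i hi, hf3 j hj]
      constructor
      · intro hadj; exact absurd hadj hnx21
      · rintro ⟨hne', hc⟩; exfalso; omega
    · rw [hf2 i hi, hf4 j hj]
      constructor
      · intro hadj; exact absurd hadj hnx22
      · rintro ⟨hne', hc⟩; exfalso; omega
    · rw [hf3 i hi, hfle j hj]
      constructor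
      · intro hadj
        have hjl : j.val = l := by
          by_contra h0
          exact no_adj_leaf' hforest w hw hvb1 hb1ne (by omega) hadj
        omega
      · rintro ⟨hne', hc⟩
        have hjl : j.val = l := by omega
        rw [hjl, hPl]; exact hvb1.symm
    · rw [hf3 i hi, hf1 j hj]
      constructor
      · intro hadj; exact absurd hadj.symm hnx11
      · rintro ⟨hne', hc⟩; exfalso; omega
    · rw [hf3 i hi, hf2 j hj]
      constructor
      · intro hadj; exact absurd hadj.symm hnx21
      · rintro ⟨hne', hc⟩; exfalso; omega
    · rw [hf3 i hi, hf3 j hj]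
      constructor
      · intro hadj; exact absurd rfl hadj.ne
      · rintro ⟨hne', hc⟩; exfalso; omega
    · rw [hf3 i hi, hf4 j hj]
      constructor
      · intro hadj; exact absurd hadj hnb12
      · rintro ⟨hne', hc⟩; exfalso; omega
    · rw [hf4 i hi, hfle j hj]
      constructor
      · intro hadj
        have hjl : j.val = l := by
          by_contra h0
          exact no_adj_leaf' hforest w hw hvb2 hb2ne (by omega) hadj
        omega
      · rintro ⟨hne', hc⟩
        have hjl : j.val = l := by omega
        rw [hjl, hPl]; exact hvb2.symm
    · rw [hf4 i hi, hf1 j hj]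
      constructor
      · intro hadj; exact absurd hadj.symm hnx12
      · rintro ⟨hne', hc⟩; exfalso; omega
    · rw [hf4 i hi, hf2 j hj]
      constructor
      · intro hadj; exact absurd hadj.symm hnx22
      · rintro ⟨hne', hc⟩; exfalso; omega
    · rw [hf4 i hi, hf3 j hj]
      constructor
      · intro hadj; exact absurd hadj.symm hnb12
      · rintro ⟨hne', hc⟩; exfalso; omega
    · rw [hf4 i hi, hf4 j hj]
      constructor
      · intro hadj; exact absurd rfl hadj.ne
      · rintro ⟨hne', hc⟩; exfalso; omega
  refine ⟨l, hl1, ⟨⟨u, v, hne, hdu, hdv, hre, hdist⟩, fun d hd => ?_⟩, ⟨⟨⟨f, hinj⟩, fun {a b} => hiff a b⟩⟩⟩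
  rw [hldef]
  exact Nat.sInf_le hd
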